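/- Assume ψ : Σ → ℝ is constant on one-cylinder sets and 0 ∈ (ψ̲, ψ̄). Then for every N > 0 and every ε > 0 there is a finite set Λ ⊂ I^* such that for every finite word ω with |S_ω ψ| ≤ N there exists ν ∈ Λ with |S_{ων} ψ| ≤ ε (i.e. the concatenation ων lies in C(ψ,ε)). -/

import Mathlib

open Filter MeasureTheory Set
open scoped BigOperators ENNReal Topology

namespace ThermoTransient

/-- The full shift space over the alphabet `I`. -/
abbrev Seq (I : Type*) : Type _ := ℕ → I

variable {I : Type*} [Fintype I]

/-- The left shift `σ`. -/
def shift (ω : Seq I) : Seq I := fun i => ω (i + 1)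

/-- Birkhoff sums `S_n f`. -/
noncomputable def birk (f : Seq I → ℝ) (n : ℕ) (ω : Seq I) : ℝ :=
  ∑ k ∈ Finset.range n, f (shift^[k] ω)

/-- The cylinder set of the finite word `w`. -/
def cyl (w : List I) : Set (Seq I) := {x | ∀ i : Fin w.length, x i.1 = w.get i}

/-- `S_ω f = sup_{x ∈ [ω]} S_{|ω|} f (x)`. -/
noncomputable def Sword (f : Seq I → ℝ) (w : List I) : ℝ :=
  sSup (birk f w.length '' cyl w)

/-- Hölder continuity with respect to the metric
`d(ω,τ) = exp(-max{k : ω and τ agree on the first k coordinates})`: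
there are `a > 0` and a constant `C` with `|f ω - f τ| ≤ C * exp (-a n)` whenever
`ω` and `τ` agree on the first `n` coordinates. -/
def Holder (f : Seq I → ℝ) : Prop :=
  ∃ a : ℝ, 0 < a ∧ ∃ C : ℝ, ∀ n : ℕ, ∀ ω τ : Seq I,
    (∀ j < n, ω j = τ j) → |f ω - f τ| ≤ C * Real.exp (-(a * n))

/-- The distortion constant `D_f`. -/
noncomputable def distortion (f : Seq I → ℝ) : ℝ :=
  sSup {r : ℝ | ∃ w : List I, w ≠ [] ∧ ∃ x ∈ cyl w, ∃ y ∈ cyl w,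
    r = |birk f w.length x - birk f w.length y|}

/-- The prefix word `ω|_n`. -/
def pre (ω : Seq I) (n : ℕ) : List I := List.ofFn fun k : Fin n => ω k.1

/-- The classical topological pressure `𝔓(f)`. -/
noncomputable def pressure (f : Seq I → ℝ) : ℝ :=
  limsup (fun n : ℕ => (n : ℝ)⁻¹ *
    Real.log (∑ u : Fin n → I, Real.exp (Sword f (List.ofFn u)))) atTop

/-- The classical topological pressure `𝔓(f, J)` restricted to the subshift over the
subalphabet `{i : I | p i}`. -/
noncomputable def pressureOn (p : I → Prop) (f : Seq I → ℝ) : ℝ :=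
  letI := Classical.decPred p
  limsup (fun n : ℕ => (n : ℝ)⁻¹ *
    Real.log (∑ u : Fin n → {i : I // p i},
      Real.exp (Sword f (List.ofFn fun k => (u k : I))))) atTop

/-- `ψ̲ = inf_ω liminf_n S_n ψ(ω)/n`. -/
noncomputable def psiLow (ψ : Seq I → ℝ) : ℝ :=
  ⨅ ω : Seq I, liminf (fun n : ℕ => birk ψ n ω / n) atTop

/-- `ψ̄ = sup_ω limsup_n S_n ψ(ω)/n`. -/
noncomputable def psiUpp (ψ : Seq I → ℝ) : ℝ :=
  ⨆ ω : Seq I, limsup (fun n : ℕ => birk ψ n ω / n) atTop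

/-- The partition sum `ζ_n(f,ψ,K) = Σ_{ω ∈ C_n(ψ,K)} exp (S_ω f)`, where
`C_n(ψ,K)` is the set of words of length `n` with `|S_ω ψ| ≤ K`. -/
noncomputable def Zn (f ψ : Seq I → ℝ) (K : ℝ) (n : ℕ) : ℝ :=
  ∑ u : Fin n → I,
    if |Sword ψ (List.ofFn u)| ≤ K then Real.exp (Sword f (List.ofFn u)) else 0

/-- `P(f,ψ,K) = limsup_n (1/n) log ζ_n(f,ψ,K)` (with value `⊥` contributed by empty
partition sums). -/
noncomputable def fibrePK (f ψ : Seq I → ℝ) (K : ℝ) : EReal :=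
  limsup (fun n : ℕ => if Zn f ψ K n = 0 then (⊥ : EReal)
    else (((n : ℝ)⁻¹ * Real.log (Zn f ψ K n) : ℝ) : EReal)) atTop

/-- The fibre-induced pressure `P(f,ψ) = lim_{K → ∞} P(f,ψ,K)`. -/
noncomputable def fibreP (f ψ : Seq I → ℝ) : EReal :=
  limsup (fun K : ℝ => fibrePK f ψ K) atTop

/-- The `α`-Poincaré exponent
`δ_α = inf {s ≥ 0 : Σ_{ω ∈ I^*, |S_ω (ψ - α)| ≤ K} exp (s S_ω φ) < ∞}`. -/
noncomputable def poincare (φ ψ : Seq I → ℝ) (α K : ℝ) : ℝ :=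
  sInf {s : ℝ | 0 ≤ s ∧
    Summable (fun w : {w : List I // |Sword (fun x => ψ x - α) w| ≤ K} =>
      Real.exp (s * Sword φ (w : List I)))}

/-- `μ` is the Gibbs measure of the potential `g`: a shift-invariant Borel probability
measure satisfying the Gibbs property. -/
def IsGibbs [MeasurableSpace I] (g : Seq I → ℝ) (μ : Measure (Seq I)) : Prop :=
  IsProbabilityMeasure μ ∧
  (∀ s : Set (Seq I), MeasurableSet s → μ (shift ⁻¹' s) = μ s) ∧
  ∃ c : ℝ, 1 ≤ c ∧ ∀ w : List I, w ≠ [] → ∀ x ∈ cyl w,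
    (μ (cyl w)).toReal ≤ c * Real.exp (birk g w.length x - w.length * pressure g) ∧
    c⁻¹ * Real.exp (birk g w.length x - w.length * pressure g) ≤ (μ (cyl w)).toReal

/-- Iterated composition `h_{ω₁} ∘ ⋯ ∘ h_{ωₙ}` of the inverse branches along a word. -/
def hcomp (h : I → ℝ → ℝ) : List I → ℝ → ℝ
  | [] => id
  | i :: w => h i ∘ hcomp h w

/-- An expanding interval map `F` with finitely many `C^{1+ε}` full branches on
pairwise disjoint subintervals of `[0,1]`, together with its inverse branches `h i`,
coding map `proj = π`, and an integer step length function `step = Ψ` constant on the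
branch intervals. -/
structure ExpandingSystem (I : Type*) [Fintype I] where
  F : ℝ → ℝ
  F' : ℝ → ℝ
  branch : I → Set ℝ
  step : ℝ → ℤ
  h : I → ℝ → ℝ
  proj : Seq I → ℝ
  two_le_card : 2 ≤ Fintype.card I
  branch_subset : ∀ i, branch i ⊆ Icc (0:ℝ) 1
  branch_ordConnected : ∀ i, (branch i).OrdConnected
  branch_interior : ∀ i, (interior (branch i)).Nonempty
  branch_disjoint : Pairwise fun i j => Disjoint (branch i) (branch j)
  branch_bij : ∀ i, BijOn F (branch i) (Icc (0:ℝ) 1)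
  branch_deriv : ∀ i, ∀ x ∈ branch i, HasDerivWithinAt F (F' x) (branch i) x
  expanding : ∀ i, ∀ x ∈ branch i, 1 < |F' x|
  deriv_holder : ∃ ε : ℝ, 0 < ε ∧ ∃ C : ℝ, ∀ i, ∀ x ∈ branch i, ∀ y ∈ branch i,
    |F' x - F' y| ≤ C * |x - y| ^ ε
  h_cont : ∀ i, ContinuousOn (h i) (Icc (0:ℝ) 1)
  h_maps : ∀ i, MapsTo (h i) (Icc (0:ℝ) 1) (closure (branch i))
  h_inv : ∀ i, ∀ x ∈ branch i, h i (F x) = x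
  step_const : ∀ i, ∀ x ∈ branch i, ∀ y ∈ branch i, step x = step y
  proj_spec : ∀ ω : Seq I, (⋂ n : ℕ, hcomp h (pre ω n) '' Icc (0:ℝ) 1) = {proj ω}

/-- The countable set `D = ⋃_{ω ∈ I^*} h_{ω₁} ∘ ⋯ ∘ h_{ωₙ}({0,1})`. -/
def ExpandingSystem.Dset (E : ExpandingSystem I) : Set ℝ :=
  ⋃ w : List I, hcomp E.h w '' ({0, 1} : Set ℝ)

/-- The set `R = (π(Σ) \ D) + ℤ`. -/
def ExpandingSystem.Rset (E : ExpandingSystem I) : Set ℝ :=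
  {x : ℝ | ∃ k : ℤ, x - k ∈ range E.proj \ E.Dset}

/-- The `Ψ`-lift `F_Ψ(x) = k + F(x - k) + Ψ(x - k)` for the integer `k` with
`x - k ∈ [0,1]` (on `R` this integer is `⌊x⌋`). -/
noncomputable def ExpandingSystem.lift (E : ExpandingSystem I) : ℝ → ℝ :=
  fun x => (⌊x⌋ : ℝ) + E.F (x - ⌊x⌋) + (E.step (x - ⌊x⌋) : ℝ)

/-- `φ` is a geometric potential for `E`: Hölder continuous, negative, and equal to
`-log |F'(π ω)|` except possibly on a finite set. -/
def ExpandingSystem.IsGeomPotential (E : ExpandingSystem I) (φ : Seq I → ℝ) : Prop :=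
  Holder φ ∧ (∀ ω, φ ω < 0) ∧
    {ω : Seq I | φ ω ≠ -Real.log |E.F' (E.proj ω)|}.Finite

/-- `ψ` is a symbolic step length function for `E`: integer-valued, constant on
one-cylinder sets, and equal to `Ψ ∘ π` except possibly on a finite set. -/
def ExpandingSystem.IsSymbolicStep (E : ExpandingSystem I) (ψ : Seq I → ℝ) : Prop :=
  (∀ ω, ∃ k : ℤ, ψ ω = (k : ℝ)) ∧ (∀ ω τ : Seq I, ω 0 = τ 0 → ψ ω = ψ τ) ∧
    {ω : Seq I | ψ ω ≠ (E.step (E.proj ω) : ℝ)}.Finite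


/-! ### Auxiliary material for Statement 14 -/

section Aux14

variable {I : Type*} [Fintype I]

lemma shift_iter (ω : Seq I) (k : ℕ) : shift^[k] ω = fun i => ω (i + k) := by
  induction k with
  | zero => simp
  | succ k ih =>
      rw [Function.iterate_succ_apply', ih]
      funext i
      show ω (i + 1 + k) = ω (i + (k + 1))
      congr 1
      omega

lemma birk_eq (ψ : Seq I → ℝ) (g : I → ℝ) (hg : ∀ ω : Seq I, ψ ω = g (ω 0))
    (n : ℕ) (ω : Seq I) : birk ψ n ω = ∑ k ∈ Finset.range n, g (ω k) := by
  unfold birk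
  refine Finset.sum_congr rfl fun k _ => ?_
  rw [hg, shift_iter]
  simp

lemma listsum_eq (g : I → ℝ) (w : List I) :
    (w.map g).sum = ∑ i : Fin w.length, g (w.get i) := by
  conv_lhs => rw [← List.ofFn_get w]
  rw [List.map_ofFn, List.sum_ofFn]
  rfl

lemma sword_eq [Nonempty I] (ψ : Seq I → ℝ) (g : I → ℝ)
    (hg : ∀ ω : Seq I, ψ ω = g (ω 0)) (w : List I) :
    Sword ψ w = (w.map g).sum := by
  classical
  set c : ℝ := (w.map g).sum with hc
  set x : Seq I := fun k => if h : k < w.length then w.get ⟨k, h⟩ else Classical.arbitrary I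
    with hxdef
  have hx : x ∈ cyl w := by
    intro i
    simp only [hxdef, i.2, dif_pos]
  have hval : ∀ y ∈ cyl w, birk ψ w.length y = c := by
    intro y hy
    rw [birk_eq ψ g hg]
    rw [hc, listsum_eq g w, ← Fin.sum_univ_eq_sum_range (fun k => g (y k)) w.length]
    exact Finset.sum_congr rfl fun i _ => by rw [hy i]
  have himg : birk ψ w.length '' cyl w = {c} := by
    refine Set.eq_singleton_iff_unique_mem.mpr ⟨⟨x, hx, hval x hx⟩, ?_⟩
    rintro z ⟨y, hy, rfl⟩
    exact hval y hy
  rw [Sword, himg, csSup_singleton]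

lemma sword_append [Nonempty I] (ψ : Seq I → ℝ) (g : I → ℝ)
    (hg : ∀ ω : Seq I, ψ ω = g (ω 0)) (w v : List I) :
    Sword ψ (w ++ v) = Sword ψ w + Sword ψ v := by
  rw [sword_eq ψ g hg, sword_eq ψ g hg, sword_eq ψ g hg, List.map_append, List.sum_append]

set_option linter.unusedSectionVars false

def wpow (v : List I) : ℕ → List I
  | 0 => []
  | n + 1 => v ++ wpow v n

lemma wsum_wpow (g : I → ℝ) (v : List I) (n : ℕ) :
    ((wpow v n).map g).sum = n * (v.map g).sum := by
  induction n with
  | zero => simp [wpow]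
  | succ n ih =>
      simp only [wpow, List.map_append, List.sum_append, ih]
      push_cast
      ring

lemma wsum_rep (g : I → ℝ) (i : I) (n : ℕ) :
    ((List.replicate n i).map g).sum = n * g i := by
  rw [List.map_replicate, List.sum_replicate, nsmul_eq_mul]

lemma small_neg (a d : ℝ) (ha : a < 0) (hd : 0 < d) :
    ∃ k : ℕ, -d ≤ a + k * d ∧ a + k * d < 0 := by
  have hx0 : 0 < -a / d := div_pos (by linarith) hd
  have h1 : (1 : ℤ) ≤ ⌈-a / d⌉ := Int.ceil_pos.mpr hx0
  refine ⟨(⌈-a / d⌉ - 1).toNat, ?_, ?_⟩ <;>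
  · have hcast : (((⌈-a / d⌉ - 1).toNat : ℕ) : ℝ) = ((⌈-a / d⌉ : ℤ) : ℝ) - 1 := by
      have h2 : ((⌈-a / d⌉ - 1).toNat : ℤ) = ⌈-a / d⌉ - 1 := Int.toNat_of_nonneg (by omega)
      exact_mod_cast congrArg ((Int.cast : ℤ → ℝ)) h2
    have h2 : -a / d ≤ ((⌈-a / d⌉ : ℤ) : ℝ) := Int.le_ceil _
    have h3 : ((⌈-a / d⌉ : ℤ) : ℝ) < -a / d + 1 := Int.ceil_lt_add_one _
    have h4 : -a / d * d = -a := div_mul_cancel₀ _ hd.ne'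
    rw [hcast]
    nlinarith

lemma pigeon (g : I → ℝ) (δ : ℝ) (hδ : 0 < δ)
    (hgap : ∀ u : List I, |(u.map g).sum| ≤ δ → (u.map g).sum = 0)
    (i j : I) (hi : 0 ≤ g i) (hj : g j < 0) :
    ∃ q z : ℤ, q ≠ 0 ∧ (q : ℝ) * g i = z * g j := by
  classical
  set c : ℝ := -g j with hcdef
  have hc : 0 < c := by rw [hcdef]; linarith
  have hgj : g j = -c := by rw [hcdef]; ring
  set m : ℕ → ℕ := fun n => (⌊((n : ℝ) * g i) / c⌋).toNat with hmdef
  have hmval : ∀ n : ℕ, ((m n : ℕ) : ℝ) = ((⌊((n : ℝ) * g i) / c⌋ : ℤ) : ℝ) := by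
    intro n
    have h0 : (0 : ℤ) ≤ ⌊((n : ℝ) * g i) / c⌋ :=
      Int.floor_nonneg.mpr (div_nonneg (by positivity) hc.le)
    simp only [hmdef]
    exact_mod_cast congrArg ((Int.cast : ℤ → ℝ)) (Int.toNat_of_nonneg h0)
  set r : ℕ → ℝ := fun n => (n : ℝ) * g i + (m n : ℝ) * g j with hrdef
  have hm_le : ∀ n : ℕ, (m n : ℝ) * c ≤ (n : ℝ) * g i := by
    intro n
    have h1 : ((m n : ℕ) : ℝ) ≤ ((n : ℝ) * g i) / c := by
      rw [hmval n]; exact Int.floor_le _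
    calc (m n : ℝ) * c ≤ (((n : ℝ) * g i) / c) * c := by nlinarith
      _ = (n : ℝ) * g i := div_mul_cancel₀ _ hc.ne'
  have hm_gt : ∀ n : ℕ, (n : ℝ) * g i < ((m n : ℝ) + 1) * c := by
    intro n
    have h2 : ((n : ℝ) * g i) / c < (m n : ℝ) + 1 := by
      rw [hmval n]; exact Int.lt_floor_add_one _
    calc (n : ℝ) * g i = (((n : ℝ) * g i) / c) * c := (div_mul_cancel₀ _ hc.ne').symm
      _ < ((m n : ℝ) + 1) * c := by nlinarith
  have hrn : ∀ n : ℕ, r n = (n : ℝ) * g i - (m n : ℝ) * c := by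
    intro n
    rw [hrdef]
    simp only
    rw [hgj]
    ring
  have hrbounds : ∀ n : ℕ, 0 ≤ r n ∧ r n < c := by
    intro n
    rw [hrn n]
    constructor
    · linarith [hm_le n]
    · nlinarith [hm_gt n]
  have hmono : ∀ {n n' : ℕ}, n ≤ n' → m n ≤ m n' := by
    intro n n' hnn
    have hnum : (n : ℝ) * g i ≤ (n' : ℝ) * g i :=
      mul_le_mul_of_nonneg_right (by exact_mod_cast hnn) hi
    have hdiv : ((n : ℝ) * g i) / c ≤ ((n' : ℝ) * g i) / c := by gcongr
    exact Int.toNat_le_toNat (Int.floor_le_floor hdiv)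
  have main : ∀ n1 n2 : ℕ, n1 < n2 → ⌊r n1 / δ⌋ = ⌊r n2 / δ⌋ →
      ∃ q z : ℤ, q ≠ 0 ∧ (q : ℝ) * g i = z * g j := by
    intro n1 n2 hlt hfe
    have hdiff : |r n2 - r n1| ≤ δ := by
      have a1 : ((⌊r n1 / δ⌋ : ℤ) : ℝ) ≤ r n1 / δ := Int.floor_le _
      have a2 : r n1 / δ < ((⌊r n1 / δ⌋ : ℤ) : ℝ) + 1 := Int.lt_floor_add_one _
      have a3 : ((⌊r n2 / δ⌋ : ℤ) : ℝ) ≤ r n2 / δ := Int.floor_le _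
      have a4 : r n2 / δ < ((⌊r n2 / δ⌋ : ℤ) : ℝ) + 1 := Int.lt_floor_add_one _
      rw [hfe] at a1 a2
      have b1 : r n2 / δ - r n1 / δ ≤ 1 := by linarith
      have b2 : r n1 / δ - r n2 / δ ≤ 1 := by linarith
      have c1 : (r n2 / δ - r n1 / δ) * δ ≤ 1 * δ := mul_le_mul_of_nonneg_right b1 hδ.le
      have c2 : (r n1 / δ - r n2 / δ) * δ ≤ 1 * δ := mul_le_mul_of_nonneg_right b2 hδ.le
      have d1 : (r n2 / δ) * δ = r n2 := div_mul_cancel₀ _ hδ.ne'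
      have d2 : (r n1 / δ) * δ = r n1 := div_mul_cancel₀ _ hδ.ne'
      rw [sub_mul, d1, d2, one_mul] at c1
      rw [sub_mul, d2, d1, one_mul] at c2
      rw [abs_le]
      constructor <;> linarith
    have hword : ((List.replicate (n2 - n1) i ++ List.replicate (m n2 - m n1) j).map g).sum
        = r n2 - r n1 := by
      rw [List.map_append, List.sum_append, wsum_rep, wsum_rep]
      have c1 : ((n2 - n1 : ℕ) : ℝ) = (n2 : ℝ) - n1 := by
        rw [Nat.cast_sub hlt.le]
      have c2 : ((m n2 - m n1 : ℕ) : ℝ) = (m n2 : ℝ) - m n1 := by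
        rw [Nat.cast_sub (hmono hlt.le)]
      rw [c1, c2, hrdef]
      ring
    have hzero := hgap _ (by rw [hword]; exact hdiff)
    rw [hword] at hzero
    simp only [hrdef] at hzero
    refine ⟨(n2 : ℤ) - n1, -((m n2 : ℤ) - m n1), by omega, ?_⟩
    push_cast
    linarith
  set B : ℤ := ⌈c / δ⌉ with hB
  have hmaps : ∀ n ∈ Finset.range (B.toNat + 2), ⌊r n / δ⌋ ∈ Finset.Icc (0 : ℤ) B := by
    intro n _
    obtain ⟨h0, h1⟩ := hrbounds n
    rw [Finset.mem_Icc]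
    refine ⟨Int.floor_nonneg.mpr (div_nonneg h0 hδ.le), ?_⟩
    have h2 : ((⌊r n / δ⌋ : ℤ) : ℝ) ≤ r n / δ := Int.floor_le _
    have h3 : r n / δ < c / δ := by gcongr
    have h4 : ((⌊r n / δ⌋ : ℤ) : ℝ) < ((B : ℤ) : ℝ) := by
      have := Int.le_ceil (c / δ)
      rw [hB]
      linarith
    exact_mod_cast h4.le
  have hcard : (Finset.Icc (0 : ℤ) B).card < (Finset.range (B.toNat + 2)).card := by
    rw [Int.card_Icc, Finset.card_range]
    omega
  obtain ⟨n1, hn1, n2, hn2, hne12, hfeq⟩ :=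
    Finset.exists_ne_map_eq_of_card_lt_of_maps_to hcard hmaps
  rcases hne12.lt_or_gt with h | h
  · exact main n1 n2 h hfeq
  · exact main n2 n1 h hfeq.symm

lemma comm_all (g : I → ℝ) (δ : ℝ) (hδ : 0 < δ)
    (hgap : ∀ u : List I, |(u.map g).sum| ≤ δ → (u.map g).sum = 0)
    (i₀ i₁ : I) (ha : g i₀ < 0) (hb : 0 < g i₁) (i : I) :
    ∃ qz : ℤ × ℤ, qz.1 ≠ 0 ∧ (qz.1 : ℝ) * g i = qz.2 * g i₀ := by
  rcases le_or_gt 0 (g i) with hi | hi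
  · obtain ⟨q, z, hq, hqz⟩ := pigeon g δ hδ hgap i i₀ hi ha
    exact ⟨(q, z), hq, hqz⟩
  · obtain ⟨q1, z1, hq1, hqz1⟩ := pigeon g δ hδ hgap i₁ i hb.le hi
    obtain ⟨q2, z2, hq2, hqz2⟩ := pigeon g δ hδ hgap i₁ i₀ hb.le ha
    have hz1 : z1 ≠ 0 := by
      rintro rfl
      have hq1' : ((q1 : ℝ)) ≠ 0 := Int.cast_ne_zero.mpr hq1
      simp only [Int.cast_zero, zero_mul] at hqz1
      have : g i₁ = 0 := by
        rcases mul_eq_zero.mp hqz1 with h | h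
        · exact absurd h hq1'
        · exact h
      linarith
    refine ⟨(z1 * q2, q1 * z2), mul_ne_zero hz1 hq2, ?_⟩
    push_cast
    linear_combination (q1 : ℝ) * hqz2 - (q2 : ℝ) * hqz1

lemma key [Nonempty I] (g : I → ℝ) (i₀ i₁ : I) (ha : g i₀ < 0) (hb : 0 < g i₁)
    (N ε : ℝ) (hε : 0 < ε) :
    ∃ Λ : Finset (List I), ∀ w : List I, |(w.map g).sum| ≤ N →
      ∃ v ∈ Λ, |(w.map g).sum + (v.map g).sum| ≤ ε := by
  classical
  by_cases hA : ∀ δ : ℝ, 0 < δ → ∃ u : List I, (u.map g).sum ≠ 0 ∧ |(u.map g).sum| ≤ δ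
  · -- "dense" case: arbitrarily small nonzero word sums exist
    obtain ⟨u, hu0, huε⟩ := hA ε hε
    obtain ⟨hu1, hu2⟩ := abs_le.mp huε
    obtain ⟨A', hA1, hA2⟩ : ∃ A' : List I, -ε ≤ (A'.map g).sum ∧ (A'.map g).sum < 0 := by
      rcases hu0.lt_or_gt with hd | hd
      · exact ⟨u, hu1, hd⟩
      · obtain ⟨k, hk1, hk2⟩ := small_neg (g i₀) ((u.map g).sum) ha hd
        refine ⟨i₀ :: wpow u k, ?_, ?_⟩ <;>
        · rw [List.map_cons, List.sum_cons, wsum_wpow]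
          linarith
    obtain ⟨B', hB1, hB2⟩ : ∃ B' : List I, 0 < (B'.map g).sum ∧ (B'.map g).sum ≤ ε := by
      rcases hu0.lt_or_gt with hd | hd
      · obtain ⟨k, hk1, hk2⟩ := small_neg (-g i₁) (-(u.map g).sum) (by linarith) (by linarith)
        refine ⟨i₁ :: wpow u k, ?_, ?_⟩ <;>
        · rw [List.map_cons, List.sum_cons, wsum_wpow]
          nlinarith [hk1, hk2, hu1, hu2]
      · exact ⟨u, hd, hu2⟩
    set a' := (A'.map g).sum with ha'
    set b' := (B'.map g).sum with hb'
    set M : ℕ := (⌈N / (-a')⌉).toNat ⊔ (⌈N / b'⌉).toNat with hM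
    refine ⟨((Finset.range (M + 1)).image (wpow A')) ∪
      ((Finset.range (M + 1)).image (wpow B')), ?_⟩
    intro w hw
    obtain ⟨hw1, hw2⟩ := abs_le.mp hw
    rcases le_or_gt 0 ((w.map g).sum) with hs | hs
    · set x := (w.map g).sum / (-a') with hx
      have hx0 : 0 ≤ x := div_nonneg hs (by linarith)
      set k : ℕ := (⌈x⌉).toNat with hk
      have hkc : (k : ℝ) = ((⌈x⌉ : ℤ) : ℝ) := by
        exact_mod_cast congrArg (Int.cast : ℤ → ℝ)
          (Int.toNat_of_nonneg (Int.ceil_nonneg hx0))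
      have hkM : k ≤ M := by
        have h1 : ⌈x⌉ ≤ ⌈N / (-a')⌉ := by
          apply Int.ceil_le_ceil
          rw [hx]
          gcongr
          linarith
        calc k = (⌈x⌉).toNat := rfl
          _ ≤ (⌈N / (-a')⌉).toNat := Int.toNat_le_toNat h1
          _ ≤ M := le_sup_left
      refine ⟨wpow A' k, Finset.mem_union_left _
        (Finset.mem_image_of_mem _ (Finset.mem_range.mpr (by omega))), ?_⟩
      rw [wsum_wpow]
      have h2 : x ≤ ((⌈x⌉ : ℤ) : ℝ) := Int.le_ceil x
      have h3 : ((⌈x⌉ : ℤ) : ℝ) < x + 1 := Int.ceil_lt_add_one x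
      have h4 : x * (-a') = (w.map g).sum := div_mul_cancel₀ _ (by linarith)
      have hp1 : ((⌈x⌉ : ℤ) : ℝ) * (-a') < (x + 1) * (-a') :=
        mul_lt_mul_of_pos_right h3 (by linarith)
      have hp2 : x * (-a') ≤ ((⌈x⌉ : ℤ) : ℝ) * (-a') :=
        mul_le_mul_of_nonneg_right h2 (by linarith)
      rw [abs_le]
      constructor
      · rw [hkc]; nlinarith
      · rw [hkc]; nlinarith
    · set x := (-(w.map g).sum) / b' with hx
      have hx0 : 0 ≤ x := div_nonneg (by linarith) (by linarith)
      set k : ℕ := (⌈x⌉).toNat with hk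
      have hkc : (k : ℝ) = ((⌈x⌉ : ℤ) : ℝ) := by
        exact_mod_cast congrArg (Int.cast : ℤ → ℝ)
          (Int.toNat_of_nonneg (Int.ceil_nonneg hx0))
      have hkM : k ≤ M := by
        have h1 : ⌈x⌉ ≤ ⌈N / b'⌉ := by
          apply Int.ceil_le_ceil
          rw [hx]
          gcongr
          linarith
        calc k = (⌈x⌉).toNat := rfl
          _ ≤ (⌈N / b'⌉).toNat := Int.toNat_le_toNat h1
          _ ≤ M := le_sup_right
      refine ⟨wpow B' k, Finset.mem_union_right _
        (Finset.mem_image_of_mem _ (Finset.mem_range.mpr (by omega))), ?_⟩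
      rw [wsum_wpow]
      have h2 : x ≤ ((⌈x⌉ : ℤ) : ℝ) := Int.le_ceil x
      have h3 : ((⌈x⌉ : ℤ) : ℝ) < x + 1 := Int.ceil_lt_add_one x
      have h4 : x * b' = -(w.map g).sum := div_mul_cancel₀ _ (by linarith)
      have hp1 : ((⌈x⌉ : ℤ) : ℝ) * b' < (x + 1) * b' :=
        mul_lt_mul_of_pos_right h3 (by linarith)
      have hp2 : x * b' ≤ ((⌈x⌉ : ℤ) : ℝ) * b' :=
        mul_le_mul_of_nonneg_right h2 (by linarith)
      rw [abs_le]
      constructor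
      · rw [hkc]; nlinarith
      · rw [hkc]; nlinarith
  · -- "gap" case: all small word sums are zero
    push_neg at hA
    obtain ⟨δ, hδ, hgap'⟩ := hA
    have hgap : ∀ u : List I, |(u.map g).sum| ≤ δ → (u.map g).sum = 0 := by
      intro u hu
      by_contra h0
      exact absurd hu (not_le.mpr (hgap' u h0))
    choose qz hq hqz using comm_all g δ hδ hgap i₀ i₁ ha hb
    set r : I → ℚ := fun i => ((qz i).2 : ℚ) / ((qz i).1 : ℚ) with hrdef
    have hgr : ∀ i, g i = ((r i : ℚ) : ℝ) * g i₀ := by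
      intro i
      have hq0 : ((qz i).1 : ℝ) ≠ 0 := Int.cast_ne_zero.mpr (hq i)
      have hcast : ((r i : ℚ) : ℝ) = ((qz i).2 : ℝ) / ((qz i).1 : ℝ) := by
        rw [hrdef]; push_cast; ring
      rw [hcast]
      field_simp
      linear_combination hqz i
    set D : ℕ := ∏ i : I, (r i).den with hDdef
    have hDpos : 0 < D := Finset.prod_pos fun i _ => (r i).pos
    set e : ℝ := (-g i₀) / D with hedef
    have hD0 : ((D : ℕ) : ℝ) ≠ 0 := Nat.cast_ne_zero.mpr hDpos.ne'
    have he : 0 < e := div_pos (by linarith) (by exact_mod_cast hDpos)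
    have hgid : g i₀ = -((D : ℝ) * e) := by
      rw [hedef]; field_simp
    have hge : ∀ i, ∃ ci : ℤ, g i = (ci : ℝ) * e := by
      intro i
      have hdvd : (r i).den ∣ D := Finset.dvd_prod_of_mem _ (Finset.mem_univ i)
      have hden0 : ((r i).den : ℝ) ≠ 0 := Nat.cast_ne_zero.mpr (r i).pos.ne'
      have hkey : ((D / (r i).den : ℕ) : ℝ) * ((r i).den : ℝ) = (D : ℝ) := by
        exact_mod_cast congrArg (Nat.cast : ℕ → ℝ) (Nat.div_mul_cancel hdvd)
      refine ⟨-((r i).num * ((D / (r i).den : ℕ) : ℤ)), ?_⟩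
      rw [hgr i, Rat.cast_def, hgid]
      push_cast
      field_simp
      rw [← hkey]
      rw [← Int.natCast_div, Int.cast_natCast]
      ring
    obtain ⟨c₀, hc₀⟩ := hge i₀
    obtain ⟨c₁, hc₁⟩ := hge i₁
    have hc₀neg : c₀ < 0 := by
      by_contra h
      push_neg at h
      have : (0 : ℝ) ≤ (c₀ : ℝ) * e := mul_nonneg (by exact_mod_cast h) he.le
      linarith [hc₀ ▸ ha]
    have hc₁pos : 0 < c₁ := by
      by_contra h
      push_neg at h
      have : (c₁ : ℝ) * e ≤ 0 := mul_nonpos_of_nonpos_of_nonneg (by exact_mod_cast h) he.le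
      linarith [hc₁ ▸ hb]
    set p : ℕ := (-c₀).toNat with hpdef
    set q' : ℕ := c₁.toNat with hq'def
    have hpc : (p : ℝ) = -(c₀ : ℝ) := by
      have : ((-c₀).toNat : ℤ) = -c₀ := Int.toNat_of_nonneg (by omega)
      rw [hpdef]
      exact_mod_cast congrArg (Int.cast : ℤ → ℝ) this
    have hqc : (q' : ℝ) = (c₁ : ℝ) := by
      have : (c₁.toNat : ℤ) = c₁ := Int.toNat_of_nonneg (by omega)
      rw [hq'def]
      exact_mod_cast congrArg (Int.cast : ℤ → ℝ) this
    have hp1 : 1 ≤ p := by rw [hpdef]; omega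
    have hq1 : 1 ≤ q' := by rw [hq'def]; omega
    have hpq1 : 1 ≤ p * q' := Nat.one_le_iff_ne_zero.mpr (by positivity)
    have hcast_pq : ((p * q' - 1 : ℕ) : ℝ) = (p : ℝ) * q' - 1 := by
      rw [Nat.cast_sub hpq1]
      push_cast
      ring
    have hsum_e : ∀ w : List I, ∃ k : ℤ, (w.map g).sum = (k : ℝ) * e := by
      intro w
      induction w with
      | nil => exact ⟨0, by simp⟩
      | cons i w ih =>
          obtain ⟨k, hk⟩ := ih
          obtain ⟨ci, hci⟩ := hge i
          refine ⟨ci + k, ?_⟩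
          rw [List.map_cons, List.sum_cons, hci, hk]
          push_cast
          ring
    have hneg : ∀ w : List I, ∃ v : List I, (v.map g).sum = -(w.map g).sum := by
      intro w
      obtain ⟨k, hk⟩ := hsum_e w
      rcases le_or_gt 0 k with hk0 | hk0
      · refine ⟨wpow w (p * q' - 1) ++ List.replicate (k.toNat * q') i₀, ?_⟩
        rw [List.map_append, List.sum_append, wsum_wpow, wsum_rep, hk, hc₀, hcast_pq]
        have hkt : ((k.toNat * q' : ℕ) : ℝ) = (k : ℝ) * q' := by
          have h1 : (k.toNat : ℤ) = k := Int.toNat_of_nonneg hk0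
          have h2 : ((k.toNat : ℕ) : ℝ) = (k : ℝ) := by
            exact_mod_cast congrArg (Int.cast : ℤ → ℝ) h1
          push_cast
          rw [h2]
        rw [hkt]
        linear_combination ((k : ℝ) * e * (q' : ℝ)) * hpc
      · refine ⟨wpow w (p * q' - 1) ++ List.replicate ((-k).toNat * p) i₁, ?_⟩
        rw [List.map_append, List.sum_append, wsum_wpow, wsum_rep, hk, hc₁, hcast_pq]
        have hkt : (((-k).toNat * p : ℕ) : ℝ) = -(k : ℝ) * p := by
          have h1 : ((-k).toNat : ℤ) = -k := Int.toNat_of_nonneg (by omega)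
          have h2 : (((-k).toNat : ℕ) : ℝ) = -(k : ℝ) := by
            exact_mod_cast congrArg (Int.cast : ℤ → ℝ) h1
          push_cast
          rw [h2]
        rw [hkt]
        linear_combination ((k : ℝ) * e * (p : ℝ)) * hqc
    set K₀ : ℤ := ⌈N / e⌉ with hK₀
    set F : ℤ → List I := fun k =>
      if h : ∃ v : List I, (v.map g).sum = -((k : ℝ) * e) then h.choose else [] with hF
    refine ⟨(Finset.Icc (-K₀) K₀).image F, ?_⟩
    intro w hw
    obtain ⟨k, hk⟩ := hsum_e w
    have hex : ∃ v : List I, (v.map g).sum = -((k : ℝ) * e) := by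
      obtain ⟨v, hv⟩ := hneg w
      exact ⟨v, by rw [hv, hk]⟩
    have hkK : k ∈ Finset.Icc (-K₀) K₀ := by
      have habs : |(k : ℝ)| * e ≤ N := by
        calc |(k : ℝ)| * e = |(k : ℝ)| * |e| := by rw [abs_of_pos he]
          _ = |(k : ℝ) * e| := (abs_mul _ _).symm
          _ = |(w.map g).sum| := by rw [hk]
          _ ≤ N := hw
      have h1 : |(k : ℝ)| ≤ N / e := (le_div_iff₀ he).mpr habs
      have h2 : |(k : ℝ)| ≤ ((K₀ : ℤ) : ℝ) := le_trans h1 (by rw [hK₀]; exact Int.le_ceil _)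
      have h3 : |k| ≤ K₀ := by
        rw [← Int.cast_abs] at h2
        exact_mod_cast h2
      rw [Finset.mem_Icc]
      constructor
      · linarith [(abs_le.mp h3).1]
      · exact (abs_le.mp h3).2
    refine ⟨F k, Finset.mem_image_of_mem F hkK, ?_⟩
    have hFk : ((F k).map g).sum = -((k : ℝ) * e) := by
      rw [hF]
      simp only
      rw [dif_pos hex]
      exact hex.choose_spec
    rw [hFk, hk]
    simp [hε.le]

end Aux14

/-- Lemma 3.5: if `ψ` is constant on one-cylinder sets and
`0 ∈ (ψ̲, ψ̄)`, then for every `N > 0` and `ε > 0` there is a finite set `Λ ⊂ I^*` of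
words such that every word `ω` with `|S_ω ψ| ≤ N` admits `ν ∈ Λ` with
`|S_{ων} ψ| ≤ ε`. -/
theorem statement14 {I : Type*} [Fintype I] (ψ : Seq I → ℝ)
    (hψcyl : ∀ ω τ : Seq I, ω 0 = τ 0 → ψ ω = ψ τ)
    (hlow : psiLow ψ < 0) (hupp : 0 < psiUpp ψ) :
    ∀ N : ℝ, 0 < N → ∀ ε : ℝ, 0 < ε → ∃ Λ : Finset (List I),
      ∀ w : List I, |Sword ψ w| ≤ N → ∃ v ∈ Λ, |Sword ψ (w ++ v)| ≤ ε := by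
  intro N hN ε hε
  -- the alphabet is nonempty
  have hne : Nonempty I := by
    by_contra h
    rw [not_nonempty_iff] at h
    haveI : IsEmpty (Seq I) := ⟨fun f => h.elim (f 0)⟩
    rw [psiLow, iInf_of_isEmpty, Real.sInf_empty] at hlow
    exact absurd hlow (lt_irrefl 0)
  haveI : Nonempty I := hne
  -- the one-cylinder value function
  set g : I → ℝ := fun i => ψ (fun _ => i) with hgdef
  have hg : ∀ ω : Seq I, ψ ω = g (ω 0) := fun ω => hψcyl ω (fun _ => ω 0) rfl
  -- uniform bound on `g`
  obtain ⟨Mg, hMg⟩ : ∃ M : ℝ, ∀ i : I, |g i| ≤ M := Finite.exists_le fun i => |g i|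
  have hMg0 : 0 ≤ Mg := le_trans (abs_nonneg _) (hMg (Classical.arbitrary I))
  have hub : ∀ (ω : Seq I) (n : ℕ), birk ψ n ω / n ≤ Mg := by
    intro ω n
    rcases Nat.eq_zero_or_pos n with rfl | hn
    · simp [birk, hMg0]
    · rw [div_le_iff₀ (by positivity)]
      rw [birk_eq ψ g hg]
      calc ∑ k ∈ Finset.range n, g (ω k) ≤ ∑ _k ∈ Finset.range n, Mg :=
            Finset.sum_le_sum fun k _ => le_trans (le_abs_self _) (hMg _)
        _ = n * Mg := by rw [Finset.sum_const, Finset.card_range, nsmul_eq_mul]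
        _ = Mg * n := mul_comm _ _
  have hlb : ∀ (ω : Seq I) (n : ℕ), -Mg ≤ birk ψ n ω / n := by
    intro ω n
    rcases Nat.eq_zero_or_pos n with rfl | hn
    · simp [birk]; linarith
    · rw [le_div_iff₀ (by positivity)]
      rw [birk_eq ψ g hg]
      calc -Mg * n = ∑ _k ∈ Finset.range n, (-Mg) := by
            rw [Finset.sum_const, Finset.card_range, nsmul_eq_mul]; ring
        _ ≤ ∑ k ∈ Finset.range n, g (ω k) :=
            Finset.sum_le_sum fun k _ => le_trans (neg_le_of_abs_le (hMg _)) le_rfl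
  -- a letter with negative value
  obtain ⟨i₀, hi₀⟩ : ∃ i : I, g i < 0 := by
    by_contra h
    push_neg at h
    have hpos : (0 : ℝ) ≤ psiLow ψ := by
      rw [psiLow]
      refine le_ciInf fun ω => ?_
      refine le_liminf_of_le ?_ ?_
      · have hbdd : IsBoundedUnder (· ≤ ·) atTop (fun n : ℕ => birk ψ n ω / n) :=
          isBoundedUnder_of ⟨Mg, fun n => hub ω n⟩
        exact hbdd.isCoboundedUnder_ge
      · refine Eventually.of_forall fun n => ?_
        apply div_nonneg _ (Nat.cast_nonneg n)
        rw [birk_eq ψ g hg]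
        exact Finset.sum_nonneg fun k _ => h _
    linarith
  -- a letter with positive value
  obtain ⟨i₁, hi₁⟩ : ∃ i : I, 0 < g i := by
    by_contra h
    push_neg at h
    have hneg' : psiUpp ψ ≤ 0 := by
      rw [psiUpp]
      refine ciSup_le fun ω => ?_
      refine limsup_le_of_le ?_ ?_
      · have hbdd : IsBoundedUnder (· ≥ ·) atTop (fun n : ℕ => birk ψ n ω / n) :=
          isBoundedUnder_of ⟨-Mg, fun n => hlb ω n⟩
        exact hbdd.isCoboundedUnder_le
      · refine Eventually.of_forall fun n => ?_
        apply div_nonpos_of_nonpos_of_nonneg _ (Nat.cast_nonneg n)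
        rw [birk_eq ψ g hg]
        exact Finset.sum_nonpos fun k _ => h _
    linarith
  obtain ⟨Λ, hΛ⟩ := key g i₀ i₁ hi₀ hi₁ N ε hε
  refine ⟨Λ, fun w hw => ?_⟩
  rw [sword_eq ψ g hg] at hw
  obtain ⟨v, hv, hsum⟩ := hΛ w hw
  refine ⟨v, hv, ?_⟩
  rw [sword_eq ψ g hg, List.map_append, List.sum_append]
  exact hsum

end ThermoTransient
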